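/- Let κ be an infinite cardinal and G an abelian group. Then G \ {0} can be covered by κ many linearly independent subsets if and only if |G| ≤ κ⁺ and either |G[ℕ]| ≤ κ or G = G[p] for some prime p. -/

import Mathlib

/-- Linear independence of a subset of an abelian group in the sense of Fuchs. -/
def LinIndepSet {G : Type*} [AddCommGroup G] (A : Set G) : Prop :=
  ∀ (s : Finset G), ↑s ⊆ A → ∀ l : G → ℤ,
    ∑ a ∈ s, l a • a = 0 → ∀ a ∈ s, l a • a = 0

open Cardinal Set

set_option linter.unusedSectionVars false
namespace Stmt14
variable {G : Type u} [AddCommGroup G]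

lemma indep_of_subsingleton {A : Set G} (h : A.Subsingleton) : LinIndepSet A := by
  classical
  intro s hs l hsum a ha
  have hs1 : s ⊆ {a} := by
    intro b hb
    simpa using h (hs hb) (hs ha)
  have : ∑ x ∈ s, l x • x = l a • a := by
    rw [Finset.eq_singleton_iff_unique_mem.mpr ⟨ha, fun b hb => by simpa using hs1 hb⟩]
    simp
  rw [this] at hsum; exact hsum

lemma indep_pair {A : Set G} (hA : LinIndepSet A) {a b : G} (hab : a ≠ b)
    (ha : a ∈ A) (hb : b ∈ A) (l₁ l₂ : ℤ) (hsum : l₁ • a + l₂ • b = 0) :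
    l₁ • a = 0 ∧ l₂ • b = 0 := by
  classical
  set l : G → ℤ := fun x => if x = a then l₁ else l₂ with hl
  have hsub : ↑({a, b} : Finset G) ⊆ A := by
    intro x hx; simp at hx; rcases hx with rfl | rfl <;> assumption
  have hsum' : ∑ x ∈ ({a, b} : Finset G), l x • x = 0 := by
    rw [Finset.sum_pair hab]
    simpa [hl, hab.symm] using hsum
  have h1 := hA {a, b} hsub l hsum' a (by simp)
  have h2 := hA {a, b} hsub l hsum' b (by simp)
  simp only [hl, if_pos rfl, if_neg hab.symm] at h1 h2
  exact ⟨h1, h2⟩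

lemma indep_triple {A : Set G} (hA : LinIndepSet A) {a b c : G}
    (hab : a ≠ b) (hac : a ≠ c) (hbc : b ≠ c)
    (ha : a ∈ A) (hb : b ∈ A) (hc : c ∈ A) (l₁ l₂ l₃ : ℤ)
    (hsum : l₁ • a + l₂ • b + l₃ • c = 0) :
    l₁ • a = 0 ∧ l₂ • b = 0 ∧ l₃ • c = 0 := by
  classical
  set l : G → ℤ := fun x => if x = a then l₁ else if x = b then l₂ else l₃ with hl
  have hsub : ↑({a, b, c} : Finset G) ⊆ A := by
    intro x hx; simp at hx; rcases hx with rfl | rfl | rfl <;> assumption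
  have hsum' : ∑ x ∈ ({a, b, c} : Finset G), l x • x = 0 := by
    rw [show ({a, b, c} : Finset G) = insert a {b, c} from rfl,
      Finset.sum_insert (by simp [hab, hac]), Finset.sum_pair hbc]
    simp only [hl, if_pos rfl, if_neg hab.symm, if_neg hac.symm, if_neg hbc.symm]
    rw [← add_assoc]; exact hsum
  have h1 := hA {a, b, c} hsub l hsum' a (by simp)
  have h2 := hA {a, b, c} hsub l hsum' b (by simp)
  have h3 := hA {a, b, c} hsub l hsum' c (by simp)
  simp only [hl, if_pos rfl, if_neg hab.symm, if_neg hac.symm, if_neg hbc.symm] at h1 h2 h3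
  exact ⟨h1, h2, h3⟩

lemma indep_quad {A : Set G} (hA : LinIndepSet A) {a b c d : G}
    (hab : a ≠ b) (hac : a ≠ c) (had : a ≠ d) (hbc : b ≠ c) (hbd : b ≠ d) (hcd : c ≠ d)
    (ha : a ∈ A) (hb : b ∈ A) (hc : c ∈ A) (hd : d ∈ A) (l₁ l₂ l₃ l₄ : ℤ)
    (hsum : l₁ • a + l₂ • b + l₃ • c + l₄ • d = 0) :
    l₁ • a = 0 ∧ l₂ • b = 0 ∧ l₃ • c = 0 ∧ l₄ • d = 0 := by
  classical
  set l : G → ℤ := fun x => if x = a then l₁ else if x = b then l₂ else if x = c then l₃ else l₄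
    with hl
  have hsub : ↑({a, b, c, d} : Finset G) ⊆ A := by
    intro x hx; simp at hx; rcases hx with rfl | rfl | rfl | rfl <;> assumption
  have hsum' : ∑ x ∈ ({a, b, c, d} : Finset G), l x • x = 0 := by
    rw [show ({a, b, c, d} : Finset G) = insert a (insert b {c, d}) from rfl,
      Finset.sum_insert (by simp [hab, hac, had]),
      Finset.sum_insert (by simp [hbc, hbd]), Finset.sum_pair hcd]
    simp only [hl, if_pos rfl, if_neg hab.symm, if_neg hac.symm, if_neg had.symm,
      if_neg hbc.symm, if_neg hbd.symm, if_neg hcd.symm]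
    rw [← add_assoc, ← add_assoc]; exact hsum
  have h1 := hA _ hsub l hsum' a (by simp)
  have h2 := hA _ hsub l hsum' b (by simp)
  have h3 := hA _ hsub l hsum' c (by simp)
  have h4 := hA _ hsub l hsum' d (by simp)
  simp only [hl, if_pos rfl, if_neg hab.symm, if_neg hac.symm, if_neg had.symm,
    if_neg hbc.symm, if_neg hbd.symm, if_neg hcd.symm] at h1 h2 h3 h4
  exact ⟨h1, h2, h3, h4⟩


lemma ne_add_of_ne_zero {a d : G} (hd : d ≠ 0) : a ≠ a + d := by
  intro h; exact hd (by simpa using h.symm)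

lemma pairR {A : Set G} (hA : LinIndepSet A) {d a b : G} (hd : d ≠ 0) (hab : a ≠ b)
    (ha : a ∈ A) (ha' : a + d ∈ A) (hb : b ∈ A) (hb' : b + d ∈ A) :
    a = b + d ∨ b = a + d := by
  by_contra h
  push_neg at h
  obtain ⟨h1, h2⟩ := h
  have hq := indep_quad hA (ne_add_of_ne_zero hd) hab h1
    (Ne.symm h2) (by simpa using hab) (ne_add_of_ne_zero hd)
    ha ha' hb hb' 1 (-1) (-1) 1 (by abel)
  have e2 : a = 0 := by simpa using hq.1
  have e1 : a + d = 0 := by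
    have := hq.2.1; rw [neg_smul, one_smul, neg_eq_zero] at this; exact this
  rw [e2, zero_add] at e1
  exact hd e1

lemma chain3 {A : Set G} (hA : LinIndepSet A) {d e : G} (h2 : d + d ≠ 0)
    (he : e ∈ A) (he1 : e + d ∈ A) (he2 : e + d + d ∈ A) : False := by
  have hd : d ≠ 0 := fun h => h2 (by rw [h, add_zero])
  have h01 : e ≠ e + d := ne_add_of_ne_zero hd
  have h02 : e ≠ e + d + d := by
    intro h; exact h2 (by have := h.symm; rw [add_assoc] at this; simpa using this)
  have h12 : e + d ≠ e + d + d := ne_add_of_ne_zero hd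
  have ht := indep_triple hA h01 h02 h12 he he1 he2 1 (-2) 1 (by abel)
  have e0 : e = 0 := by simpa using ht.1
  have e1 : (-2 : ℤ) • (e + d) = 0 := ht.2.1
  rw [e0, zero_add] at e1
  apply h2
  have : (-2 : ℤ) • d = -(d + d) := by
    rw [neg_smul, two_smul]
  rw [this, neg_eq_zero] at e1
  exact e1

lemma chainCase {A : Set G} (hA : LinIndepSet A) {d c₁ c₂ c₃ : G} (hd : d ≠ 0)
    (h12 : c₁ ≠ c₂) (h13 : c₁ ≠ c₃) (h23 : c₂ ≠ c₃)
    (m1 : c₁ ∈ A) (m1' : c₁ + d ∈ A) (m2 : c₂ ∈ A) (m2' : c₂ + d ∈ A)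
    (m3 : c₃ ∈ A) (m3' : c₃ + d ∈ A) (hc2 : c₂ = c₁ + d) : False := by
  have hR13 := pairR hA hd h13 m1 m1' m3 m3'
  have hc1 : c₁ = c₃ + d := by
    rcases hR13 with h | h
    · exact h
    · exact absurd (h.trans hc2.symm) h23.symm
  have hR23 := pairR hA hd h23 m2 m2' m3 m3'
  have hc3 : c₃ = c₂ + d := by
    rcases hR23 with h | h
    · exact absurd (h.trans hc1.symm) h12.symm
    · exact h
  -- 3d = 0
  have h3d : d + d + d = 0 := by
    have : c₁ = c₁ + d + d + d := by
      conv_lhs => rw [hc1, hc3, hc2]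
    have := this.symm
    rw [add_assoc, add_assoc, ← add_assoc d d d] at this
    simpa using this
  by_cases h2 : d + d = 0
  · rw [h2, zero_add] at h3d; exact hd h3d
  · exact chain3 hA h2 m1 (hc2 ▸ m2) (by rw [← hc2, ← hc3]; exact m3)

lemma C_three {A : Set G} (hA : LinIndepSet A) {d c₁ c₂ c₃ : G} (hd : d ≠ 0)
    (h12 : c₁ ≠ c₂) (h13 : c₁ ≠ c₃) (h23 : c₂ ≠ c₃)
    (m1 : c₁ ∈ A) (m1' : c₁ + d ∈ A) (m2 : c₂ ∈ A) (m2' : c₂ + d ∈ A)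
    (m3 : c₃ ∈ A) (m3' : c₃ + d ∈ A) : False := by
  rcases pairR hA hd h12 m1 m1' m2 m2' with h | h
  · exact chainCase hA hd h12.symm h23 h13 m2 m2' m1 m1' m3 m3' h
  · exact chainCase hA hd h12 h13 h23 m1 m1' m2 m2' m3 m3' h

universe v

lemma mk_le_of_cover_caps {κ : Cardinal.{u}} {ι : Type u} (hι : #ι = κ) (c : ι → Set G) (X : Set G)
    (hcov : X ⊆ ⋃ i, c i)
    (hcap : ∀ i, ∀ x ∈ X ∩ c i, ∀ y ∈ X ∩ c i, x = y) : #X ≤ κ := by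
  classical
  have hch : ∀ x : X, ∃ i, (x : G) ∈ c i := by
    intro x; simpa using hcov x.2
  choose f hf using hch
  have hinj : Function.Injective f := by
    intro x y hxy
    exact Subtype.ext (hcap (f y) x ⟨x.2, hxy ▸ hf x⟩ y ⟨y.2, hf y⟩)
  calc #X ≤ #ι := Cardinal.mk_le_of_injective hinj
    _ = κ := hι

lemma big_layer {κ : Cardinal.{u}} (hκ : ℵ₀ ≤ κ)
    (hT : κ < #{x : G | ∃ n : ℕ, 0 < n ∧ n • x = 0}) :
    ∃ n : ℕ, 0 < n ∧ κ < #{x : G | n • x = 0} := by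
  by_contra h
  push_neg at h
  apply hT.not_ge
  have hsub : {x : G | ∃ n : ℕ, 0 < n ∧ n • x = 0} ⊆
      ⋃ (n : ULift.{u} ℕ), {x : G | (n.down + 1) • x = 0} := by
    rintro x ⟨n, hn, hx⟩
    refine Set.mem_iUnion.mpr ⟨⟨n - 1⟩, ?_⟩
    simpa [Nat.sub_add_cancel hn] using hx
  calc #{x : G | ∃ n : ℕ, 0 < n ∧ n • x = 0}
      ≤ #(⋃ (n : ULift.{u} ℕ), {x : G | (n.down + 1) • x = 0}) := Cardinal.mk_le_mk_of_subset hsub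
    _ ≤ #(ULift.{u} ℕ) * ⨆ (n : ULift.{u} ℕ), #{x : G | (n.down + 1) • x = 0} :=
        Cardinal.mk_iUnion_le _
    _ ≤ ℵ₀ * κ := by
        apply mul_le_mul'
        · simp
        · exact ciSup_le' fun n => h _ (Nat.succ_pos _)
    _ ≤ κ * κ := mul_le_mul' hκ le_rfl
    _ = κ := Cardinal.mul_eq_self hκ

lemma prime_big_of_big {κ : Cardinal.{u}} (hκ : ℵ₀ ≤ κ) :
    ∀ n : ℕ, 0 < n → κ < #{x : G | n • x = 0} →
    ∃ p : ℕ, p.Prime ∧ κ < #{x : G | p • x = 0} := by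
  intro n
  induction n using Nat.strong_induction_on with
  | _ n IH =>
    intro hn hbig
    rcases eq_or_ne n 1 with rfl | hn1
    · exfalso
      apply hbig.not_ge
      have : {x : G | 1 • x = 0} ⊆ {(0 : G)} := by
        intro x hx; simpa using hx
      calc #{x : G | 1 • x = 0} ≤ #({(0:G)} : Set G) := Cardinal.mk_le_mk_of_subset this
        _ ≤ 1 := by simp
        _ ≤ κ := le_trans (by norm_num) hκ
    obtain ⟨p, hp, hpd⟩ := Nat.exists_prime_and_dvd hn1
    by_cases hbigp : κ < #{x : G | p • x = 0}
    · exact ⟨p, hp, hbigp⟩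
    push_neg at hbigp
    obtain ⟨m, rfl⟩ := hpd
    have hm0 : 0 < m := Nat.pos_of_mul_pos_left (by rwa [Nat.mul_comm] at hn)
    have hmn : m < p * m := by
      have := hp.one_lt
      calc m = 1 * m := (one_mul m).symm
        _ < p * m := by exact (Nat.mul_lt_mul_right hm0).mpr this
    -- the multiplication-by-p map
    have key : #{x : G | (p * m) • x = 0} ≤ #{x : G | m • x = 0} * κ := by
      have : ∀ b : {x : G | m • x = 0},
          #((fun (x : {x : G | (p * m) • x = 0}) =>
              (⟨p • (x : G), by
                have hx := x.2
                simp only [Set.mem_setOf_eq] at hx ⊢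
                rw [← smul_smul] at hx
                rw [smul_comm]
                exact hx⟩ : {x : G | m • x = 0})) ⁻¹' {b}) ≤ #{x : G | p • x = 0} := by
        intro b
        set f := fun (x : {x : G | (p * m) • x = 0}) =>
              (⟨p • (x : G), by
                have hx := x.2
                simp only [Set.mem_setOf_eq] at hx ⊢
                rw [← smul_smul] at hx
                rw [smul_comm]
                exact hx⟩ : {x : G | m • x = 0}) with hfdef
        rcases isEmpty_or_nonempty (f ⁻¹' {b}) with he | hne
        · simp [Cardinal.mk_eq_zero]
        · obtain ⟨x₀⟩ := hne
          have hg : Function.Injective (fun (x : f ⁻¹' {b}) =>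
              (⟨(x : G) - ((x₀ : {x : G | (p*m) • x = 0}) : G), by
                have h1 : p • ((x : {x : G | (p*m) • x = 0}) : G) = b := congrArg Subtype.val x.2
                have h2 : p • ((x₀ : {x : G | (p*m) • x = 0}) : G) = b := congrArg Subtype.val x₀.2
                simp only [Set.mem_setOf_eq, smul_sub, h1, h2, sub_self]⟩ :
                {x : G | p • x = 0})) := by
            intro x y hxy
            have := congrArg Subtype.val hxy
            simp only [sub_left_inj] at this
            exact Subtype.ext (Subtype.ext this)
          exact Cardinal.mk_le_of_injective hg
      exact (Cardinal.mk_le_mk_mul_of_mk_preimage_le _ fun b => (this b).trans hbigp)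
    have hbigm : κ < #{x : G | m • x = 0} := by
      by_contra hc
      push_neg at hc
      apply hbig.not_ge
      calc #{x : G | (p * m) • x = 0} ≤ #{x : G | m • x = 0} * κ := key
        _ ≤ κ * κ := mul_le_mul' hc le_rfl
        _ = κ := Cardinal.mul_eq_self hκ
    exact IH m hmn hm0 hbigm

lemma torsion_cases {κ : Cardinal.{u}} (hκ : ℵ₀ ≤ κ)
    (c : κ.out → Set G) (hind : ∀ i, LinIndepSet (c i))
    (hcov : {x : G | x ≠ 0} ⊆ ⋃ i, c i) :
    #{x : G | ∃ n : ℕ, 0 < n ∧ n • x = 0} ≤ κ ∨ ∃ p : ℕ, p.Prime ∧ ∀ x : G, p • x = 0 := by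
  by_cases hT : #{x : G | ∃ n : ℕ, 0 < n ∧ n • x = 0} ≤ κ
  · exact Or.inl hT
  push_neg at hT
  obtain ⟨n, hn, hbig⟩ := big_layer hκ hT
  obtain ⟨p, hp, hbigp⟩ := prime_big_of_big hκ n hn hbig
  right
  refine ⟨p, hp, ?_⟩
  by_contra hg
  push_neg at hg
  obtain ⟨g, hpg⟩ := hg
  set X : Set G := (fun t => g + t) '' {x : G | p • x = 0} with hX
  have hXcard : κ < #X := by
    rwa [hX, Cardinal.mk_image_eq (add_right_injective g)]
  have hX'card : κ < #(X \ {0} : Set G) := by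
    by_contra hc
    push_neg at hc
    apply hXcard.not_ge
    calc #X ≤ #((X \ {0} : Set G) ∪ {0} : Set G) :=
          Cardinal.mk_le_mk_of_subset (by intro x hx; by_cases h : x = 0 <;> simp [h, hx])
      _ ≤ #(X \ {0} : Set G) + #({0} : Set G) := Cardinal.mk_union_le _ _
      _ ≤ κ + 1 := by
          apply add_le_add hc; simp
      _ ≤ κ + κ := by apply add_le_add le_rfl; exact le_trans (by norm_num) hκ
      _ = κ := Cardinal.add_eq_self hκ
  apply hX'card.not_ge
  apply mk_le_of_cover_caps (Cardinal.mk_out κ) c _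
    (fun x hx => hcov hx.2)
  rintro i x ⟨hxX, hxc⟩ y ⟨hyX, hyc⟩
  by_contra hxy
  obtain ⟨t₁, ht₁, hxt⟩ := hxX.1
  obtain ⟨t₂, ht₂, hyt⟩ := hyX.1
  have hsum : (p : ℤ) • x + (-(p : ℤ)) • y = 0 := by
    rw [neg_smul, ← sub_eq_add_neg, ← smul_sub, ← hxt, ← hyt]
    have : g + t₁ - (g + t₂) = t₁ - t₂ := by abel
    rw [this, natCast_zsmul, smul_sub, ht₁, ht₂, sub_zero]
  have := (indep_pair (hind i) hxy hxc hyc _ _ hsum).1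
  rw [natCast_zsmul, ← hxt, smul_add, ht₁, add_zero] at this
  exact hpg this

lemma lt_mk_diff_singleton {κ : Cardinal.{u}} (hκ : ℵ₀ ≤ κ) {X : Set G} (h : κ < #X) (a : G) :
    κ < #(X \ {a} : Set G) := by
  by_contra hc
  push_neg at hc
  apply h.not_ge
  calc #X ≤ #((X \ {a} : Set G) ∪ {a} : Set G) :=
        Cardinal.mk_le_mk_of_subset (by intro x hx; by_cases hh : x = a <;> simp [hh, hx])
    _ ≤ #(X \ {a} : Set G) + #({a} : Set G) := Cardinal.mk_union_le _ _
    _ ≤ κ + κ := by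
        apply add_le_add hc
        simp only [Cardinal.mk_singleton]
        exact le_trans (by norm_num) hκ
    _ = κ := Cardinal.add_eq_self hκ

lemma mk_le_two_of_no_three {S : Set G}
    (h : ∀ a ∈ S, ∀ b ∈ S, ∀ x ∈ S, a ≠ b → a ≠ x → b ≠ x → False) : #S ≤ 2 := by
  rcases S.eq_empty_or_nonempty with rfl | ⟨a, ha⟩
  · simp
  by_cases h1 : S ⊆ {a}
  · calc #S ≤ #({a} : Set G) := Cardinal.mk_le_mk_of_subset h1
      _ ≤ 2 := by
        simp only [Cardinal.mk_singleton]
        exact_mod_cast Nat.le_of_lt_succ (by norm_num)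
  obtain ⟨b, hb, hba⟩ : ∃ b ∈ S, b ≠ a := by
    by_contra hc; push_neg at hc; exact h1 fun x hx => by simp [hc x hx]
  by_cases h2 : S ⊆ {a, b}
  · calc #S ≤ #({a, b} : Set G) := Cardinal.mk_le_mk_of_subset h2
      _ ≤ #({b} : Set G) + 1 := Cardinal.mk_insert_le
      _ ≤ 2 := by
        simp only [Cardinal.mk_singleton]
        norm_num
  obtain ⟨x, hx, hxab⟩ : ∃ x ∈ S, x ∉ ({a, b} : Set G) := by
    by_contra hc; push_neg at hc; exact h2 hc
  simp only [Set.mem_insert_iff, Set.mem_singleton_iff, not_or] at hxab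
  exact absurd (h a ha b hb x hx (Ne.symm hba) (Ne.symm hxab.1) (Ne.symm hxab.2)) (by simp)

/-- The set of `x` such that both `x` and `x + d` lie in `c i`. -/
def Cset {κ : Cardinal.{u}} (c : κ.out → Set G) (i : κ.out) (d : G) : Set G :=
  {x | x ∈ c i ∧ x + d ∈ c i}

lemma mk_Cset_le {κ : Cardinal.{u}} (c : κ.out → Set G) (hind : ∀ i, LinIndepSet (c i))
    (i : κ.out) {d : G} (hd : d ≠ 0) : #(Cset c i d) ≤ 2 := by
  apply mk_le_two_of_no_three
  intro x hx y hy z hz hxy hxz hyz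
  exact C_three (hind i) hd hxy hxz hyz hx.1 hx.2 hy.1 hy.2 hz.1 hz.2

/-- One closure step. -/
def step {κ : Cardinal.{u}} (c : κ.out → Set G) (S : Set G) : Set G :=
  S ∪ Set.image2 (fun x y => x - y) S S ∪
    ⋃ (i : κ.out), ⋃ (d ∈ {d : G | d ∈ S ∧ d ≠ 0}), Cset c i d

lemma mk_step_le {κ : Cardinal.{u}} (hκ : ℵ₀ ≤ κ) (c : κ.out → Set G)
    (hind : ∀ i, LinIndepSet (c i)) {S : Set G} (hS : #S ≤ Order.succ κ) :
    #(step c S) ≤ Order.succ κ := by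
  have hκ' : ℵ₀ ≤ Order.succ κ := hκ.trans (Order.le_succ κ)
  have h2 : (2 : Cardinal.{u}) ≤ Order.succ κ :=
    le_trans (by exact_mod_cast (Cardinal.nat_lt_aleph0 2).le) hκ'
  have hκle : κ ≤ Order.succ κ := Order.le_succ κ
  calc #(step c S)
      ≤ #((S ∪ Set.image2 (fun x y => x - y) S S : Set G)) +
        #(⋃ (i : κ.out), ⋃ (d ∈ {d : G | d ∈ S ∧ d ≠ 0}), Cset c i d) :=
        Cardinal.mk_union_le _ _
    _ ≤ (Order.succ κ + Order.succ κ) + Order.succ κ := by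
        apply add_le_add
        · apply le_trans (Cardinal.mk_union_le _ _)
          apply add_le_add hS
          apply le_trans Cardinal.mk_image2_le
          calc #S * #S ≤ Order.succ κ * Order.succ κ := mul_le_mul' hS hS
            _ = Order.succ κ := Cardinal.mul_eq_self hκ'
        · apply le_trans (Cardinal.mk_iUnion_le _)
          calc #(κ.out) * ⨆ i, #(⋃ (d ∈ {d : G | d ∈ S ∧ d ≠ 0}), Cset c i d)
              ≤ κ * Order.succ κ := by
                apply mul_le_mul'
                · exact le_of_eq (Cardinal.mk_out κ)
                · apply ciSup_le'
                  intro i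
                  apply le_trans (Cardinal.mk_biUnion_le _ _)
                  calc #{d : G | d ∈ S ∧ d ≠ 0} * ⨆ d : {d : G | d ∈ S ∧ d ≠ 0}, #(Cset c i d.1)
                      ≤ Order.succ κ * 2 := by
                        apply mul_le_mul'
                        · exact le_trans (Cardinal.mk_le_mk_of_subset fun x hx => hx.1) hS
                        · exact ciSup_le' fun d => mk_Cset_le c hind i d.2.2
                    _ ≤ Order.succ κ * Order.succ κ := mul_le_mul' le_rfl h2
                    _ = Order.succ κ := Cardinal.mul_eq_self hκ'
            _ ≤ Order.succ κ * Order.succ κ := mul_le_mul' hκle le_rfl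
            _ = Order.succ κ := Cardinal.mul_eq_self hκ'
    _ = Order.succ κ := by
        rw [Cardinal.add_eq_self hκ', Cardinal.add_eq_self hκ']

lemma forward_card {κ : Cardinal.{u}} (hκ : ℵ₀ ≤ κ)
    (c : κ.out → Set G) (hind : ∀ i, LinIndepSet (c i))
    (hcov : {x : G | x ≠ 0} ⊆ ⋃ i, c i) : #G ≤ Order.succ κ := by
  classical
  by_contra hlarge
  push_neg at hlarge
  have hκ' : ℵ₀ ≤ Order.succ κ := hκ.trans (Order.le_succ κ)
  obtain ⟨S0, hS0⟩ : ∃ S0 : Set G, #S0 = Order.succ κ :=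
    Cardinal.le_mk_iff_exists_set.mp hlarge.le
  -- iterate the closure step
  set Sn : ℕ → Set G := fun n => Nat.rec S0 (fun _ S => step c S) n with hSn
  have hSnsucc : ∀ n, Sn (n + 1) = step c (Sn n) := fun n => rfl
  have hSnmono : ∀ n, Sn n ⊆ Sn (n + 1) := by
    intro n x hx
    rw [hSnsucc]
    exact Or.inl (Or.inl hx)
  have hSnle : ∀ m n, m ≤ n → Sn m ⊆ Sn n := by
    intro m n hmn
    induction hmn with
    | refl => exact subset_rfl
    | step h ih => exact ih.trans (hSnmono _)
  set W : Set G := ⋃ (n : ULift.{u} ℕ), Sn n.down with hW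
  have hmemW : ∀ x, x ∈ W ↔ ∃ n : ℕ, x ∈ Sn n := by
    intro x
    simp only [hW, Set.mem_iUnion]
    exact ⟨fun ⟨n, h⟩ => ⟨n.down, h⟩, fun ⟨n, h⟩ => ⟨⟨n⟩, h⟩⟩
  have hWcard : #W ≤ Order.succ κ := by
    have hScard : ∀ n, #(Sn n) ≤ Order.succ κ := by
      intro n
      induction n with
      | zero => exact le_of_eq hS0
      | succ n ih => exact mk_step_le hκ c hind ih
    calc #W ≤ #(ULift.{u} ℕ) * ⨆ n : ULift.{u} ℕ, #(Sn n.down) := Cardinal.mk_iUnion_le _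
      _ ≤ ℵ₀ * Order.succ κ := by
          apply mul_le_mul'
          · simp
          · exact ciSup_le' fun n => hScard n.down
      _ ≤ Order.succ κ * Order.succ κ := mul_le_mul' hκ' le_rfl
      _ = Order.succ κ := Cardinal.mul_eq_self hκ'
  have hWsub : ∀ x ∈ W, ∀ y ∈ W, x - y ∈ W := by
    intro x hx y hy
    obtain ⟨m, hm⟩ := (hmemW x).mp hx
    obtain ⟨n, hn⟩ := (hmemW y).mp hy
    apply (hmemW _).mpr ⟨max m n + 1, ?_⟩
    rw [hSnsucc]
    exact Or.inl (Or.inr (Set.mem_image2_of_mem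
      (hSnle m (max m n) (le_max_left _ _) hm) (hSnle n (max m n) (le_max_right _ _) hn)))
  have hWC : ∀ (i : κ.out) (d : G), d ∈ W → d ≠ 0 → ∀ x ∈ Cset c i d, x ∈ W := by
    intro i d hd hd0 x hx
    obtain ⟨n, hn⟩ := (hmemW d).mp hd
    apply (hmemW _).mpr ⟨n + 1, ?_⟩
    rw [hSnsucc]
    refine Or.inr ?_
    refine Set.mem_iUnion.mpr ⟨i, ?_⟩
    refine Set.mem_biUnion ⟨hn, hd0⟩ hx
  -- pick z outside W
  obtain ⟨z, hz⟩ : ∃ z : G, z ∉ W := by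
    by_contra hc
    push_neg at hc
    apply hlarge.not_ge
    calc #G = #(Set.univ : Set G) := Cardinal.mk_univ.symm
      _ ≤ #W := Cardinal.mk_le_mk_of_subset fun x _ => hc x
      _ ≤ Order.succ κ := hWcard
  -- the translated coloring
  set W' : Set G := (S0 \ {-z} : Set G) with hW'
  have hW'W : W' ⊆ W := by
    intro x hx
    exact (hmemW x).mpr ⟨0, hx.1⟩
  have hW'big : κ < #W' := by
    apply lt_mk_diff_singleton hκ
    rw [hS0]
    exact Order.lt_succ κ
  have hzw : ∀ w : W', z + (w : G) ≠ 0 := by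
    rintro ⟨w, hw⟩ h
    exact hw.2 (by simp only [Set.mem_singleton_iff]; linear_combination (norm := abel_nf) h)
  have hchoice : ∀ w : W', ∃ i, z + (w : G) ∈ c i := by
    intro w
    simpa using hcov (hzw w)
  choose f hf using hchoice
  have : ¬ Function.Injective f := by
    intro hinj
    apply hW'big.not_ge
    calc #W' ≤ #(κ.out) := Cardinal.mk_le_of_injective hinj
      _ = κ := Cardinal.mk_out κ
  rw [Function.not_injective_iff] at this
  obtain ⟨w₁, w₂, hfw, hne⟩ := this
  set d : G := (w₁ : G) - (w₂ : G) with hd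
  have hd0 : d ≠ 0 := by
    intro h
    apply hne
    apply Subtype.ext
    rw [← sub_eq_zero]
    exact h
  have hdW : d ∈ W := hWsub _ (hW'W w₁.2) _ (hW'W w₂.2)
  have hxC : z + (w₂ : G) ∈ Cset c (f w₁) d := by
    constructor
    · rw [hfw]; exact hf w₂
    · have : z + (w₂ : G) + d = z + (w₁ : G) := by rw [hd]; abel
      rw [this]
      exact hf w₁
  have hxW : z + (w₂ : G) ∈ W := hWC _ _ hdW hd0 _ hxC
  apply hz
  have : z = (z + (w₂ : G)) - (w₂ : G) := by abel
  rw [this]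
  exact hWsub _ hxW _ (hW'W w₂.2)

lemma cover_of_closure {κ : Cardinal.{u}} (hκ : ℵ₀ ≤ κ) (D : Set G)
    (cl : Set G → AddSubgroup G)
    (mono : ∀ S T : Set G, S ⊆ T → (cl S : Set G) ⊆ (cl T : Set G))
    (ext : ∀ S : Set G, S ⊆ (cl S : Set G))
    (finchar : ∀ (S : Set G) (x : G), x ∈ cl S → ∃ F : Finset G, ↑F ⊆ S ∧ x ∈ cl ↑F)
    (hD0 : ∀ a ∈ D, a ∉ cl ∅)
    (hP : ∀ (S : Set G), ∀ x ∈ D, ∀ n : ℤ, n • x ∈ cl S → n • x ≠ 0 → x ∈ cl S)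
    (hG : #G ≤ Order.succ κ)
    (hsize : ∀ S : Set G, #S ≤ κ → #(cl S : Set G) ≤ κ) :
    ∃ c : κ.out → Set G, (∀ i, LinIndepSet (c i)) ∧ D ⊆ ⋃ i, c i := by
  classical
  have hne : Nonempty κ.out := by
    rw [← Cardinal.mk_ne_zero_iff, Cardinal.mk_out]
    intro h
    rw [h] at hκ
    exact (Cardinal.aleph0_pos).not_ge hκ
  -- embed G into the well-order of type (succ κ).ord
  obtain ⟨f⟩ : Nonempty (G ↪ (Order.succ κ).ord.ToType) := by
    rw [← Cardinal.le_def, Cardinal.mk_toType, Cardinal.card_ord]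
    exact hG
  have wf : WellFounded (fun x y : G => f x < f y) :=
    InvImage.wf f (IsWellFounded.wf)
  have hSane : ∀ a : G, a ∈ (cl {x | f x ≤ f a} : Set G) := fun a => ext _ (le_refl (f a))
  set ν : G → G := fun a => wf.min {g : G | a ∈ (cl {x | f x ≤ f g} : Set G)} ⟨a, hSane a⟩
    with hν
  have hν1 : ∀ a : G, a ∈ (cl {x | f x ≤ f (ν a)} : Set G) := fun a =>
    wf.min_mem {g : G | a ∈ (cl {x | f x ≤ f g} : Set G)} ⟨a, hSane a⟩
  have hν2 : ∀ a g : G, a ∈ (cl {x | f x ≤ f g} : Set G) → ¬ f g < f (ν a) := fun a g hg =>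
    wf.not_lt_min {g : G | a ∈ (cl {x | f x ≤ f g} : Set G)} hg
  have hνlow : ∀ a ∈ D, a ∉ (cl {x | f x < f (ν a)} : Set G) := by
    intro a haD hmem
    obtain ⟨F, hFsub, hFmem⟩ := finchar _ a hmem
    rcases F.eq_empty_or_nonempty with rfl | hFne
    · rw [Finset.coe_empty] at hFmem
      exact hD0 a haD hFmem
    · obtain ⟨g, hgF, hgmax⟩ := F.exists_max_image (fun x => f x) hFne
      have : a ∈ (cl {x | f x ≤ f g} : Set G) :=
        mono _ _ (fun x hx => hgmax x hx) hFmem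
      exact hν2 a g this (hFsub hgF)
  -- size of initial segments
  have hseg : ∀ g : G, #{x : G | f x ≤ f g} ≤ κ := by
    intro g
    have hinj : Function.Injective (fun x : {x : G | f x ≤ f g} =>
        if h : f (x : G) < f g then some (⟨f (x : G), h⟩ : Set.Iio (f g)) else none) := by
      intro x y hxy
      by_cases hx : f (x : G) < f g <;> by_cases hy : f (y : G) < f g <;>
        simp only [hx, hy, dif_pos, dif_neg, not_false_iff] at hxy
      · exact Subtype.ext (f.injective (congrArg Subtype.val (Option.some_injective _ hxy)))
      · exact absurd hxy (by simp)
      · exact absurd hxy (by simp)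
      · have hx' : f (x : G) = f g := le_antisymm x.2 (not_lt.mp hx)
        have hy' : f (y : G) = f g := le_antisymm y.2 (not_lt.mp hy)
        exact Subtype.ext (f.injective (hx'.trans hy'.symm))
    calc #{x : G | f x ≤ f g} ≤ #(Option (Set.Iio (f g))) := Cardinal.mk_le_of_injective hinj
      _ = #(Set.Iio (f g)) + 1 := by rw [Cardinal.mk_option]
      _ ≤ κ + 1 := by
          apply add_le_add _ le_rfl
          have := Cardinal.mk_Iio_ord_toType (f g)
          exact Order.lt_succ_iff.mp this
      _ ≤ κ + κ := add_le_add le_rfl (le_trans (by norm_num) hκ)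
      _ = κ := Cardinal.add_eq_self hκ
  have hfib : ∀ g : G, #(cl {x | f x ≤ f g} : Set G) ≤ κ := fun g => hsize _ (hseg g)
  have hembs : ∀ g : G, Nonempty ((cl {x | f x ≤ f g} : Set G) ↪ κ.out) := by
    intro g
    rw [← Cardinal.le_def, Cardinal.mk_out]
    exact hfib g
  have emb : ∀ g : G, ((cl {x | f x ≤ f g} : Set G) ↪ κ.out) := fun g => (hembs g).some
  set F : G → G → κ.out := fun g a =>
    if h : a ∈ (cl {x | f x ≤ f g} : Set G) then emb g ⟨a, h⟩ else Classical.arbitrary _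
    with hF
  have hFinj : ∀ g a b, a ∈ (cl {x | f x ≤ f g} : Set G) → b ∈ (cl {x | f x ≤ f g} : Set G) →
      F g a = F g b → a = b := by
    intro g a b ha hb hab
    rw [hF] at hab
    simp only [dif_pos ha, dif_pos hb] at hab
    exact congrArg Subtype.val ((emb g).injective hab)
  refine ⟨fun i => {a | a ∈ D ∧ F (ν a) a = i}, ?_, ?_⟩
  · -- independence
    intro i
    intro s
    induction s using Finset.strongInduction with
    | _ s ih =>
      intro hs l hsum
      rcases s.eq_empty_or_nonempty with rfl | hsne
      · intro a ha; exact absurd ha (by simp)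
      obtain ⟨a0, ha0s, hmax⟩ := s.exists_max_image (fun a => f (ν a)) hsne
      have ha0 : a0 ∈ D ∧ F (ν a0) a0 = i := hs ha0s
      have hrest : ∀ b ∈ s.erase a0, b ∈ (cl {x | f x < f (ν a0)} : Set G) := by
        intro b hb
        have hbs := Finset.mem_of_mem_erase hb
        have hbne := Finset.ne_of_mem_erase hb
        have hbD : b ∈ D ∧ F (ν b) b = i := hs hbs
        have hνne : ν b ≠ ν a0 := by
          intro hνeq
          apply hbne
          apply hFinj (ν a0) b a0 (hνeq ▸ hν1 b) (hν1 a0)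
          have h1 : F (ν a0) b = i := by rw [← hνeq]; exact hbD.2
          rw [h1, ha0.2]
        have hflt : f (ν b) < f (ν a0) := by
          rcases lt_or_eq_of_le (hmax b hbs) with h | h
          · exact h
          · exact absurd (f.injective h) hνne
        exact mono _ _ (fun x hx => lt_of_le_of_lt hx hflt) (hν1 b)
      have hsplit : l a0 • a0 + ∑ b ∈ s.erase a0, l b • b = 0 := by
        rw [Finset.add_sum_erase s (fun b => l b • b) ha0s]
        exact hsum
      have hmem : l a0 • a0 ∈ cl {x | f x < f (ν a0)} := by
        have : l a0 • a0 = -∑ b ∈ s.erase a0, l b • b := by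
          rw [eq_neg_iff_add_eq_zero]; exact hsplit
        rw [this]
        exact neg_mem (sum_mem fun b hb => zsmul_mem (hrest b hb) _)
      have h0 : l a0 • a0 = 0 := by
        by_contra hne0
        exact hνlow a0 ha0.1 (hP _ a0 ha0.1 (l a0) hmem hne0)
      have hsum' : ∑ b ∈ s.erase a0, l b • b = 0 := by
        rw [h0, zero_add] at hsplit
        exact hsplit
      have hih := ih (s.erase a0) (Finset.erase_ssubset ha0s)
        (fun b hb => hs (Finset.mem_of_mem_erase hb)) l hsum'
      intro a ha
      rcases eq_or_ne a a0 with rfl | hne'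
      · exact h0
      · exact hih a (Finset.mem_erase.mpr ⟨hne', ha⟩)
  · -- covering
    intro a ha
    exact Set.mem_iUnion.mpr ⟨F (ν a) a, ha, rfl⟩

lemma closure_finchar (S : Set G) (x : G) (hx : x ∈ AddSubgroup.closure S) :
    ∃ F : Finset G, ↑F ⊆ S ∧ x ∈ AddSubgroup.closure (F : Set G) := by
  classical
  induction hx using AddSubgroup.closure_induction with
  | mem x hx => exact ⟨{x}, by simpa using hx, AddSubgroup.subset_closure (by simp)⟩
  | zero => exact ⟨∅, by simp, zero_mem _⟩
  | add x y hx hy ihx ihy =>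
      obtain ⟨F₁, hF₁, hx₁⟩ := ihx
      obtain ⟨F₂, hF₂, hy₂⟩ := ihy
      refine ⟨F₁ ∪ F₂, ?_, ?_⟩
      · intro a ha
        rcases Finset.mem_union.mp (by exact_mod_cast ha) with h | h
        · exact hF₁ h
        · exact hF₂ h
      · have hm1 : (F₁ : Set G) ⊆ ((F₁ ∪ F₂ : Finset G) : Set G) := by
          intro a ha
          simp only [Finset.coe_union, Set.mem_union]
          exact Or.inl ha
        have hm2 : (F₂ : Set G) ⊆ ((F₁ ∪ F₂ : Finset G) : Set G) := by
          intro a ha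
          simp only [Finset.coe_union, Set.mem_union]
          exact Or.inr ha
        exact add_mem (AddSubgroup.closure_mono hm1 hx₁) (AddSubgroup.closure_mono hm2 hy₂)
  | neg x hx ihx =>
      obtain ⟨F, hF, hx₁⟩ := ihx
      exact ⟨F, hF, neg_mem hx₁⟩

lemma mk_closure_le {κ : Cardinal.{u}} (hκ : ℵ₀ ≤ κ) {S : Set G} (hS : #S ≤ κ) :
    #(AddSubgroup.closure S : Set G) ≤ κ := by
  classical
  set τ : ↥S × Bool → G := fun p => if p.2 then (p.1 : G) else -(p.1 : G) with hτ
  set σ : List (↥S × Bool) → G := fun l => (l.map τ).sum with hσ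
  set flipP : ↥S × Bool → ↥S × Bool := fun p => (p.1, !p.2) with hflip
  have hτflip : ∀ p, τ (flipP p) = -τ p := by
    rintro ⟨a, b⟩
    cases b <;> simp [hτ, hflip]
  have key : ∀ l : List (↥S × Bool), σ (l.map flipP) = -σ l := by
    intro l
    induction l with
    | nil => simp [hσ]
    | cons p l ih =>
        simp only [hσ, List.map_cons, List.sum_cons] at ih ⊢
        rw [hτflip p, ih, neg_add]
  have hsub : (AddSubgroup.closure S : Set G) ⊆ Set.range σ := by
    intro x hx
    induction hx using AddSubgroup.closure_induction with
    | mem x hx => exact ⟨[(⟨x, hx⟩, true)], by simp [hσ, hτ]⟩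
    | zero => exact ⟨[], by simp [hσ]⟩
    | add x y hx hy ihx ihy =>
        obtain ⟨l₁, hl₁⟩ := ihx
        obtain ⟨l₂, hl₂⟩ := ihy
        refine ⟨l₁ ++ l₂, ?_⟩
        simp only [hσ, List.map_append, List.sum_append] at hl₁ hl₂ ⊢
        rw [hl₁, hl₂]
    | neg x hx ihx =>
        obtain ⟨l, hl⟩ := ihx
        exact ⟨l.map flipP, by rw [key l, hl]⟩
  calc #(AddSubgroup.closure S : Set G) ≤ #(Set.range σ) := Cardinal.mk_le_mk_of_subset hsub
    _ ≤ #(List (↥S × Bool)) := Cardinal.mk_range_le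
    _ ≤ max ℵ₀ #(↥S × Bool) := Cardinal.mk_list_le_max _
    _ ≤ κ := by
        apply max_le hκ
        rw [Cardinal.mk_prod, Cardinal.mk_bool]
        calc Cardinal.lift.{0} #↥S * Cardinal.lift.{u} 2
            ≤ κ * κ := by
              apply mul_le_mul'
              · simpa using hS
              · simp only [Cardinal.lift_ofNat]
                exact le_trans (by exact_mod_cast (Cardinal.nat_lt_aleph0 2).le) hκ
          _ = κ := Cardinal.mul_eq_self hκ

lemma suffA {κ : Cardinal.{u}} (hκ : ℵ₀ ≤ κ) (hG : #G ≤ Order.succ κ) {p : ℕ}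
    (hp : p.Prime) (htor : ∀ x : G, p • x = 0) :
    ∃ c : κ.out → Set G, (∀ i, LinIndepSet (c i)) ∧ {x : G | x ≠ 0} ⊆ ⋃ i, c i := by
  apply cover_of_closure hκ {x : G | x ≠ 0} (fun S => AddSubgroup.closure S)
  · intro S T h
    exact SetLike.coe_subset_coe.mpr (AddSubgroup.closure_mono h)
  · intro S
    exact AddSubgroup.subset_closure
  · exact closure_finchar
  · intro a ha hmem
    rw [AddSubgroup.closure_empty] at hmem
    exact ha (AddSubgroup.mem_bot.mp hmem)
  · intro S x hx n hmem hne
    have hpz : ((p : ℤ)) • x = 0 := by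
      rw [natCast_zsmul]
      exact htor x
    have hnp : ¬ ((p : ℤ) ∣ n) := by
      rintro ⟨m, rfl⟩
      apply hne
      rw [mul_comm, mul_smul, hpz, smul_zero]
    have hcop : IsCoprime (n : ℤ) (p : ℤ) :=
      ((Prime.coprime_iff_not_dvd (Nat.prime_iff_prime_int.mp hp)).mpr hnp).symm
    obtain ⟨u, v, huv⟩ := hcop
    have h1 : (u * n + v * p) • x = x := by rw [huv, one_smul]
    have h3 : (u * n + v * (p : ℤ)) • x = u • (n • x) := by
      rw [add_smul, mul_smul, mul_smul, hpz, smul_zero, add_zero]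
    have hux : u • (n • x) = x := by rw [← h3]; exact h1
    have h2 : u • (n • x) ∈ AddSubgroup.closure S := zsmul_mem hmem u
    rwa [hux] at h2
  · exact hG
  · intro S hS
    exact mk_closure_le hκ hS

/-- The divisible closure of the subgroup generated by a set. -/
def divCl (S : Set G) : AddSubgroup G where
  carrier := {x | ∃ n : ℤ, n ≠ 0 ∧ n • x ∈ AddSubgroup.closure S}
  zero_mem' := ⟨1, one_ne_zero, by rw [smul_zero]; exact zero_mem _⟩
  add_mem' := by
    rintro x y ⟨n, hn, hnx⟩ ⟨m, hm, hmy⟩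
    refine ⟨n * m, mul_ne_zero hn hm, ?_⟩
    rw [smul_add]
    apply add_mem
    · rw [mul_comm, mul_smul]
      exact zsmul_mem hnx m
    · rw [mul_smul]
      exact zsmul_mem hmy n
  neg_mem' := by
    rintro x ⟨n, hn, hnx⟩
    exact ⟨n, hn, by rw [smul_neg]; exact neg_mem hnx⟩

lemma mem_divCl {S : Set G} {x : G} :
    x ∈ divCl S ↔ ∃ n : ℤ, n ≠ 0 ∧ n • x ∈ AddSubgroup.closure S := Iff.rfl

lemma nat_version {x : G} {n : ℤ} (hn : n ≠ 0) {H : AddSubgroup G} (h : n • x ∈ H) :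
    ∃ m : ℕ, 0 < m ∧ (m : ℤ) • x ∈ H := by
  refine ⟨n.natAbs, Int.natAbs_pos.mpr hn, ?_⟩
  rcases Int.natAbs_eq n with he | he
  · rw [← he]; exact h
  · have : (n.natAbs : ℤ) = -n := by omega
    rw [this, neg_smul]
    exact neg_mem h

lemma mk_divCl_le {κ : Cardinal.{u}} (hκ : ℵ₀ ≤ κ)
    (hT : #{x : G | ∃ n : ℕ, 0 < n ∧ n • x = 0} ≤ κ)
    {S : Set G} (hS : #S ≤ κ) : #(divCl S : Set G) ≤ κ := by
  classical
  set H := AddSubgroup.closure S with hH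
  have hHcard : #(H : Set G) ≤ κ := mk_closure_le hκ hS
  set T : Set G := {x : G | ∃ n : ℕ, 0 < n ∧ n • x = 0} with hTdef
  set A : ULift.{u} ℕ → Set G := fun n => {x : G | ((n.down + 1 : ℕ) : ℤ) • x ∈ H} with hA
  have hcover : (divCl S : Set G) ⊆ ⋃ n, A n := by
    intro x hx
    obtain ⟨n, hn, hnx⟩ := hx
    obtain ⟨m, hm, hmx⟩ := nat_version hn hnx
    refine Set.mem_iUnion.mpr ⟨⟨m - 1⟩, ?_⟩
    simp only [hA, Set.mem_setOf_eq]
    rwa [Nat.sub_add_cancel hm]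
  have hAcard : ∀ n : ULift.{u} ℕ, #(A n) ≤ κ := by
    intro n
    set m : ℤ := ((n.down + 1 : ℕ) : ℤ) with hm
    have hm0 : m ≠ 0 := by positivity
    set pick : G → G := fun y => if h : ∃ x : G, m • x = y then h.choose else 0 with hpick
    have hΦinj : Function.Injective (fun x : A n =>
        ((⟨m • (x : G), x.2⟩, ⟨(x : G) - pick (m • (x : G)), by
          have hex : ∃ z : G, m • z = m • (x : G) := ⟨x, rfl⟩
          have hspec : m • hex.choose = m • (x : G) := hex.choose_spec
          refine ⟨n.down + 1, Nat.succ_pos _, ?_⟩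
          have : ((n.down + 1 : ℕ) : ℤ) • ((x : G) - pick (m • (x : G))) = 0 := by
            rw [smul_sub, ← hm]
            rw [hpick]
            simp only [dif_pos hex]
            rw [hspec, sub_self]
          rw [← natCast_zsmul]
          exact this⟩) : ↥(H : Set G) × ↥T)) := by
      rintro x y hxy
      have h1 := congrArg (fun q => (q.1 : G)) hxy
      have h2 := congrArg (fun q => (q.2 : G)) hxy
      simp only at h1 h2
      apply Subtype.ext
      have := congrArg (fun t => t + pick (m • (x : G))) h2
      simp only [sub_add_cancel] at this
      rw [this, h1]
      simp
    calc #(A n) ≤ #(↥(H : Set G) × ↥T) := Cardinal.mk_le_of_injective hΦinj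
      _ = #(H : Set G) * #T := by rw [Cardinal.mk_prod, Cardinal.lift_id, Cardinal.lift_id]
      _ ≤ κ * κ := mul_le_mul' hHcard hT
      _ = κ := Cardinal.mul_eq_self hκ
  calc #(divCl S : Set G) ≤ #(⋃ n, A n) := Cardinal.mk_le_mk_of_subset hcover
    _ ≤ #(ULift.{u} ℕ) * ⨆ n, #(A n) := Cardinal.mk_iUnion_le _
    _ ≤ ℵ₀ * κ := by
        apply mul_le_mul'
        · simp
        · exact ciSup_le' hAcard
    _ ≤ κ * κ := mul_le_mul' hκ le_rfl
    _ = κ := Cardinal.mul_eq_self hκ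

lemma indep_mono {A B : Set G} (h : A ⊆ B) (hB : LinIndepSet B) : LinIndepSet A :=
  fun s hs => hB s (Set.Subset.trans hs h)

lemma suffB {κ : Cardinal.{u}} (hκ : ℵ₀ ≤ κ) (hG : #G ≤ Order.succ κ)
    (hT : #{x : G | ∃ n : ℕ, 0 < n ∧ n • x = 0} ≤ κ) :
    ∃ c : κ.out → Set G, (∀ i, LinIndepSet (c i)) ∧ {x : G | x ≠ 0} ⊆ ⋃ i, c i := by
  classical
  set T : Set G := {x : G | ∃ n : ℕ, 0 < n ∧ n • x = 0} with hTdef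
  obtain ⟨c₁, hind₁, hcov₁⟩ :
      ∃ c : κ.out → Set G, (∀ i, LinIndepSet (c i)) ∧ {x : G | x ∉ T} ⊆ ⋃ i, c i := by
    apply cover_of_closure hκ {x : G | x ∉ T} (fun S => divCl S)
    · intro S U h x hx
      obtain ⟨n, hn, hmem⟩ := hx
      exact ⟨n, hn, AddSubgroup.closure_mono h hmem⟩
    · intro S x hx
      exact ⟨1, one_ne_zero, by rw [one_smul]; exact AddSubgroup.subset_closure hx⟩
    · intro S x hx
      obtain ⟨n, hn, hmem⟩ := hx
      obtain ⟨F, hF, hmemF⟩ := closure_finchar S _ hmem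
      exact ⟨F, hF, n, hn, hmemF⟩
    · intro a ha hmem
      obtain ⟨n, hn, hmem'⟩ := hmem
      rw [AddSubgroup.closure_empty] at hmem'
      obtain ⟨m, hm, hmx⟩ := nat_version hn hmem'
      apply ha
      refine ⟨m, hm, ?_⟩
      rw [← natCast_zsmul]
      exact AddSubgroup.mem_bot.mp hmx
    · intro S x hxD n hmem hne
      have hn0 : n ≠ 0 := by
        intro h
        exact hne (by rw [h, zero_smul])
      obtain ⟨k, hk, hkx⟩ := hmem
      refine ⟨k * n, mul_ne_zero hk hn0, ?_⟩
      rw [mul_smul]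
      exact hkx
    · exact hG
    · intro S hS
      exact mk_divCl_le hκ hT hS
  have hTemb : Nonempty (↥T ↪ κ.out) := by
    rw [← Cardinal.le_def, Cardinal.mk_out]
    exact hT
  obtain ⟨embT⟩ := hTemb
  have hψ : Nonempty ((κ.out ⊕ κ.out) ↪ κ.out) := by
    rw [← Cardinal.le_def]
    have : #(κ.out ⊕ κ.out : Type u) = κ + κ := by
      rw [Cardinal.mk_sum, Cardinal.mk_out, Cardinal.lift_id]
    rw [this, Cardinal.mk_out, Cardinal.add_eq_self hκ]
  obtain ⟨ψ⟩ := hψ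
  refine ⟨fun i => {x | ∃ j, ψ (Sum.inl j) = i ∧ x ∈ c₁ j} ∪
    {x | ∃ h : x ∈ T, x ≠ 0 ∧ ψ (Sum.inr (embT ⟨x, h⟩)) = i}, ?_, ?_⟩
  · intro i
    by_cases hin : ∃ j, ψ (Sum.inl j) = i
    · obtain ⟨j, hj⟩ := hin
      apply indep_mono _ (hind₁ j)
      rintro x (⟨j', hj', hx⟩ | ⟨hxT, hx0, hxe⟩)
      · have : Sum.inl (β := κ.out) j' = Sum.inl j := ψ.injective (hj'.trans hj.symm)
        rwa [Sum.inl.inj this] at hx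
      · exact absurd (ψ.injective (hxe.trans hj.symm)) (by simp)
    · apply indep_of_subsingleton
      rintro x (⟨j, hj, _⟩ | ⟨hxT, hx0, hxe⟩) y hy
      · exact absurd ⟨j, hj⟩ hin
      rcases hy with ⟨j, hj, _⟩ | ⟨hyT, hy0, hye⟩
      · exact absurd ⟨j, hj⟩ hin
      have := ψ.injective (hxe.trans hye.symm)
      have := embT.injective (Sum.inr.inj this)
      exact congrArg Subtype.val this
  · intro x hx
    by_cases hxT : x ∈ T
    · exact Set.mem_iUnion.mpr ⟨ψ (Sum.inr (embT ⟨x, hxT⟩)), Or.inr ⟨hxT, hx, rfl⟩⟩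
    · obtain ⟨j, hj⟩ := Set.mem_iUnion.mp (hcov₁ hxT)
      exact Set.mem_iUnion.mpr ⟨ψ (Sum.inl j), Or.inl ⟨j, rfl, hj⟩⟩

end Stmt14

open Cardinal in
theorem stmt14 {G : Type u} [AddCommGroup G] (κ : Cardinal.{u}) (hκ : ℵ₀ ≤ κ) :
    (∃ c : κ.out → Set G, (∀ i, LinIndepSet (c i)) ∧
        {x : G | x ≠ 0} ⊆ ⋃ i, c i) ↔
      (#G ≤ Order.succ κ ∧
        (#{x : G | ∃ n : ℕ, 0 < n ∧ n • x = 0} ≤ κ ∨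
          ∃ p : ℕ, p.Prime ∧ ∀ x : G, p • x = 0)) := by
  constructor
  · rintro ⟨c, hind, hcov⟩
    exact ⟨Stmt14.forward_card hκ c hind hcov, Stmt14.torsion_cases hκ c hind hcov⟩
  · rintro ⟨hG, hcase | ⟨p, hp, hall⟩⟩
    · exact Stmt14.suffB hκ hG hcase
    · exact Stmt14.suffA hκ hG hp hall
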